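/- Let F : C × C → ℝ be an equilibrium bifunction and for r > 0 define T_r(x) as the unique z ∈ C with F(z,y) + (1/r)⟨y−z, z−x⟩ ≥ 0 for all y ∈ C. Then for r, s > 0 and x, y ∈ H: ‖T_r(x) − T_s(y)‖ ≤ ‖x − y‖ + |1 − s/r| ‖T_r(y) − y‖, assuming T_r, T_s are well-defined single-valued mappings satisfying their defining variational inequalities and F is monotone (F(x,y) + F(y,x) ≤ 0). -/

import Mathlib

open Filter Topology RealInnerProductSpace

private lemma norm_le_of_sq_le {H : Type*} [NormedAddCommGroup H]
    [InnerProductSpace ℝ H] (u : H) (c : ℝ) (hc : 0 ≤ c)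
    (h : ‖u‖ * ‖u‖ ≤ c * ‖u‖) : ‖u‖ ≤ c := by
  rcases eq_or_lt_of_le (norm_nonneg u) with h0 | h0
  · rw [← h0]; exact hc
  · exact le_of_mul_le_mul_right h h0

theorem stmt_18
    {H : Type*} [NormedAddCommGroup H] [InnerProductSpace ℝ H] [CompleteSpace H]
    (C : Set H) (hCne : C.Nonempty) (hCcl : IsClosed C) (hCcv : Convex ℝ C)
    (F : H → H → ℝ)
    (hF1 : ∀ x ∈ C, F x x = 0)
    (hF2 : ∀ x ∈ C, ∀ y ∈ C, F x y + F y x ≤ 0)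
    (T : ℝ → H → H)
    (hTC : ∀ r : ℝ, 0 < r → ∀ x : H, T r x ∈ C)
    (hTvi : ∀ r : ℝ, 0 < r → ∀ x : H, ∀ y ∈ C,
      0 ≤ F (T r x) y + (1 / r) * ⟪y - T r x, T r x - x⟫) :
    ∀ r s : ℝ, 0 < r → 0 < s → ∀ x y : H,
      ‖T r x - T s y‖ ≤ ‖x - y‖ + |1 - s / r| * ‖T r y - y‖ := by
  -- Key: summed variational inequalities + monotonicity
  have key : ∀ r s : ℝ, 0 < r → 0 < s → ∀ x y : H,
      0 ≤ (1 / r) * ⟪T s y - T r x, T r x - x⟫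
        + (1 / s) * ⟪T r x - T s y, T s y - y⟫ := by
    intro r s hr hs x y
    have h1 := hTvi r hr x (T s y) (hTC s hs y)
    have h2 := hTvi s hs y (T r x) (hTC r hr x)
    have hmono := hF2 (T r x) (hTC r hr x) (T s y) (hTC s hs y)
    nlinarith [h1, h2, hmono]
  intro r s hr hs x y
  have hrne : r ≠ 0 := ne_of_gt hr
  -- Step 1: T r is nonexpansive
  have step1 : ‖T r x - T r y‖ ≤ ‖x - y‖ := by
    have hk := key r r hr hr x y
    set u := T r x - T r y with hu
    have hsum : (1 / r) * ⟪T r y - T r x, T r x - x⟫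
        + (1 / r) * ⟪T r x - T r y, T r y - y⟫
        = (1 / r) * (- ⟪u, u⟫ + ⟪u, x - y⟫) := by
      rw [hu]
      rw [show T r y - T r x = -(T r x - T r y) by abel]
      rw [inner_neg_left]
      have e1 : ⟪T r x - T r y, T r x - x⟫ = ⟪T r x - T r y, T r x - T r y⟫
          + ⟪T r x - T r y, T r y - x⟫ := by
        rw [← inner_add_right]; congr 1; abel
      have e2 : ⟪T r x - T r y, T r y - x⟫ = - ⟪T r x - T r y, x - y⟫
          + ⟪T r x - T r y, T r y - y⟫ := by
        rw [← inner_neg_right, ← inner_add_right]; congr 1; abel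
      rw [e1, e2]; ring
    rw [hsum] at hk
    have hpos : (0:ℝ) < 1 / r := by positivity
    have h3 : ⟪u, u⟫ ≤ ⟪u, x - y⟫ := by nlinarith [hk]
    have h4 : ⟪u, x - y⟫ ≤ ‖u‖ * ‖x - y‖ := real_inner_le_norm u (x - y)
    refine norm_le_of_sq_le u ‖x - y‖ (norm_nonneg _) ?_
    calc ‖u‖ * ‖u‖ = ⟪u, u⟫ := (real_inner_self_eq_norm_mul_norm u).symm
      _ ≤ ⟪u, x - y⟫ := h3
      _ ≤ ‖u‖ * ‖x - y‖ := h4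
      _ = ‖x - y‖ * ‖u‖ := by ring
  -- Step 2: ‖T r y - T s y‖ ≤ |1 - s/r| ‖T r y - y‖
  have step2 : ‖T r y - T s y‖ ≤ |1 - s / r| * ‖T r y - y‖ := by
    have hk := key r s hr hs y y
    set u := T r y - T s y with hu
    -- multiply by s
    have hk2 : 0 ≤ (s / r) * ⟪T s y - T r y, T r y - y⟫
        + ⟪T r y - T s y, T s y - y⟫ := by
      have := mul_le_mul_of_nonneg_left hk (le_of_lt hs)
      have hs' : s ≠ 0 := ne_of_gt hs
      calc (0:ℝ) = s * 0 := by ring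
        _ ≤ s * ((1 / r) * ⟪T s y - T r y, T r y - y⟫
            + (1 / s) * ⟪T r y - T s y, T s y - y⟫) := this
        _ = (s / r) * ⟪T s y - T r y, T r y - y⟫
            + ⟪T r y - T s y, T s y - y⟫ := by field_simp
    have e1 : ⟪T r y - T s y, T s y - y⟫ = - ⟪u, u⟫ + ⟪u, T r y - y⟫ := by
      rw [hu, show T s y - y = -(T r y - T s y) + (T r y - y) by abel,
        inner_add_right, inner_neg_right]
    have e2 : ⟪T s y - T r y, T r y - y⟫ = - ⟪u, T r y - y⟫ := by
      rw [hu, show T s y - T r y = -(T r y - T s y) by abel, inner_neg_left]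
    rw [e1, e2] at hk2
    have h3 : ⟪u, u⟫ ≤ (1 - s / r) * ⟪u, T r y - y⟫ := by nlinarith [hk2]
    have h4 : (1 - s / r) * ⟪u, T r y - y⟫ ≤ |1 - s / r| * (‖u‖ * ‖T r y - y‖) := by
      calc (1 - s / r) * ⟪u, T r y - y⟫ ≤ |(1 - s / r) * ⟪u, T r y - y⟫| := le_abs_self _
        _ = |1 - s / r| * |⟪u, T r y - y⟫| := abs_mul _ _
        _ ≤ |1 - s / r| * (‖u‖ * ‖T r y - y‖) := by
            exact mul_le_mul_of_nonneg_left (abs_real_inner_le_norm u _) (abs_nonneg _)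
    refine norm_le_of_sq_le u _ (by positivity) ?_
    calc ‖u‖ * ‖u‖ = ⟪u, u⟫ := (real_inner_self_eq_norm_mul_norm u).symm
      _ ≤ (1 - s / r) * ⟪u, T r y - y⟫ := h3
      _ ≤ |1 - s / r| * (‖u‖ * ‖T r y - y‖) := h4
      _ = |1 - s / r| * ‖T r y - y‖ * ‖u‖ := by ring
  calc ‖T r x - T s y‖ ≤ ‖T r x - T r y‖ + ‖T r y - T s y‖ := by
        have := norm_sub_le_norm_sub_add_norm_sub (T r x) (T r y) (T s y)
        simpa using this
    _ ≤ ‖x - y‖ + |1 - s / r| * ‖T r y - y‖ := add_le_add step1 step2
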